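/- arXiv:1810.02036 — 4 statements merged into one kernel-verified Lean document; each statement's English description precedes it below -/
import Mathlib

section
/- The function k(v) = Σ_{n=1}^{∞} (-1)^{n+1} n² e^{-n²v/2} on (0,∞) is a probability density: k(v) ≥ 0 for all v > 0 and ∫₀^∞ k(v) dv = 1. -/
open MeasureTheory Real Set Filter Topology HurwitzZeta Asymptotics

noncomputable section
namespace KSaux

lemma half_ne_zero : (((1:ℝ)/2 : ℝ) : UnitAddCircle) ≠ 0 := by
  intro h
  rw [AddCircle.coe_eq_zero_iff] at h
  obtain ⟨n, hn⟩ := h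
  rw [zsmul_one] at hn
  have h2 : ((2 * n : ℤ) : ℝ) = 1 := by push_cast; linarith
  have : (2 * n : ℤ) = 1 := by exact_mod_cast h2
  omega

def G (t : ℝ) : ℝ := cosKernel (((1:ℝ)/2 : ℝ) : UnitAddCircle) (t / (2*π))

lemma one_le_cc_aux (n : ℤ) : (1:ℝ) ≤ (2*(n:ℝ)+1)^2 := by
  have hz : (1:ℤ) ≤ (2*n+1)^2 := by
    have h := Int.one_le_abs (show (2*n+1:ℤ) ≠ 0 by omega)
    nlinarith [sq_abs (2*n+1:ℤ)]
  exact_mod_cast hz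


def cc (n : ℤ) : ℝ := 2*π^2*((n:ℝ)+1/2)^2

lemma cc_nonneg (n : ℤ) : 0 ≤ cc n := by rw [cc]; positivity

def fd (n : ℤ) (t : ℝ) : ℝ := (-1:ℝ)^n * (-(n:ℝ)^2/2) * rexp (-(n:ℝ)^2 * t / 2)

def gd (n : ℤ) (t : ℝ) : ℝ :=
  Real.sqrt (2*π) * (cc n / t^2 - 1/(2*t)) * ((Real.sqrt t)⁻¹ * rexp (-cc n / t))

lemma hasDerivAt_f (n : ℤ) (t : ℝ) :
    HasDerivAt (fun u ↦ (-1:ℝ)^n * rexp (-(n:ℝ)^2 * u / 2)) (fd n t) t := by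
  have h1 : HasDerivAt (fun u : ℝ ↦ -(n:ℝ)^2 * u / 2) (-(n:ℝ)^2/2) t := by
    have := ((hasDerivAt_id t).const_mul (-(n:ℝ)^2)).div_const 2
    simpa using this
  have h2 := h1.exp
  have h3 := h2.const_mul ((-1:ℝ)^n)
  refine h3.congr_deriv ?_
  rw [fd]; ring

lemma hasDerivAt_g (n : ℤ) {t : ℝ} (ht : 0 < t) :
    HasDerivAt (fun u ↦ Real.sqrt (2*π) * (Real.sqrt u)⁻¹ * rexp (-cc n / u)) (gd n t) t := by
  have hs : Real.sqrt t ≠ 0 := by positivity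
  have h1 : HasDerivAt (fun u : ℝ ↦ (Real.sqrt u)⁻¹)
      (-(1/(2*Real.sqrt t)) / (Real.sqrt t)^2) t :=
    (Real.hasDerivAt_sqrt ht.ne').inv hs
  have h2 : HasDerivAt (fun u : ℝ ↦ -cc n / u) (cc n / t^2) t := by
    have h := (hasDerivAt_inv ht.ne').const_mul (-cc n)
    have he : (fun u : ℝ ↦ -cc n * u⁻¹) = fun u : ℝ ↦ -cc n / u := by
      funext u; rw [div_eq_mul_inv]
    rw [he] at h
    refine h.congr_deriv ?_
    ring
  have h3 := h2.exp
  have h4 := (h1.mul h3).const_mul (Real.sqrt (2*π))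
  have harr : (fun u ↦ Real.sqrt (2*π) * (Real.sqrt u)⁻¹ * rexp (-cc n / u)) =
      fun u ↦ Real.sqrt (2*π) * ((Real.sqrt u)⁻¹ * rexp (-cc n / u)) := by
    funext u; ring
  rw [harr]
  refine h4.congr_deriv ?_
  rw [gd]
  set s := Real.sqrt t with hsdef
  have hs2 : s^2 = t := Real.sq_sqrt ht.le
  rw [← hs2]
  have hsne : s ≠ 0 := hs
  field_simp
  ring

def u1 (r : ℝ) (n : ℤ) : ℝ := (n:ℝ)^2/2 * rexp (-(n:ℝ)^2 * (r/2) / 2)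

lemma summable_u1 {r : ℝ} (hr : 0 < r) : Summable (u1 r) := by
  have h := (HurwitzKernelBounds.summable_f_int 2 0 (show 0 < r/2/(2*π) by positivity)).mul_left
    (1/2 : ℝ)
  refine h.congr fun n ↦ ?_
  rw [HurwitzKernelBounds.f_int, u1]
  have h2 : -π * ((n:ℝ)+0)^2 * (r/2/(2*π)) = -(n:ℝ)^2 * (r/2) / 2 := by field_simp; ring
  rw [h2, add_zero, sq_abs]
  ring

lemma abs_neg_one_zpow (n : ℤ) : |(-1:ℝ)^n| = 1 := by
  rcases Int.even_or_odd n with h | h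
  · rw [h.neg_one_zpow, abs_one]
  · rw [h.neg_one_zpow, abs_neg, abs_one]

lemma fd_bound {t₀ t : ℝ} (ht : t ∈ Ioo (t₀/2) (2*t₀)) (n : ℤ) : ‖fd n t‖ ≤ u1 t₀ n := by
  obtain ⟨h1, h2⟩ := ht
  rw [fd, u1, Real.norm_eq_abs, abs_mul, abs_mul, abs_neg_one_zpow, one_mul,
    abs_of_nonneg (Real.exp_nonneg _),
    show |(-(n:ℝ)^2/2)| = (n:ℝ)^2/2 by
      rw [abs_of_nonpos (by nlinarith [sq_nonneg (n:ℝ)] : (-(n:ℝ)^2/2) ≤ 0)]; ring]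
  exact mul_le_mul_of_nonneg_left
    (Real.exp_le_exp.mpr (by nlinarith [sq_nonneg (n:ℝ)])) (by positivity)

def u2 (t₀ : ℝ) (n : ℤ) : ℝ :=
  Real.sqrt (2*π) * (4*cc n/t₀^2 + 1/t₀) * ((Real.sqrt (t₀/2))⁻¹ * rexp (-cc n/(2*t₀)))

lemma summable_u2 {t₀ : ℝ} (ht₀ : 0 < t₀) : Summable (u2 t₀) := by
  have hr : 0 < π/t₀ := by positivity
  have h := ((HurwitzKernelBounds.summable_f_int 2 (1/2) hr).mul_left
      (Real.sqrt (2*π) * (8*π^2/t₀^2) * (Real.sqrt (t₀/2))⁻¹)).add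
    ((HurwitzKernelBounds.summable_f_int 0 (1/2) hr).mul_left
      (Real.sqrt (2*π) * (1/t₀) * (Real.sqrt (t₀/2))⁻¹))
  refine h.congr fun n ↦ ?_
  rw [HurwitzKernelBounds.f_int, HurwitzKernelBounds.f_int, u2]
  have h2 : -π * ((n:ℝ)+1/2)^2 * (π/t₀) = -cc n/(2*t₀) := by rw [cc]; field_simp
  rw [h2, pow_zero, one_mul, sq_abs, cc]
  ring

lemma gd_bound {t₀ t : ℝ} (ht₀ : 0 < t₀) (ht : t ∈ Ioo (t₀/2) (2*t₀)) (n : ℤ) :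
    ‖gd n t‖ ≤ u2 t₀ n := by
  obtain ⟨h1, h2⟩ := ht
  have htpos : 0 < t := lt_trans (by positivity) h1
  rw [gd, u2, Real.norm_eq_abs, abs_mul, abs_mul,
    abs_of_nonneg (Real.sqrt_nonneg (2*π)),
    abs_of_nonneg (show (0:ℝ) ≤ (Real.sqrt t)⁻¹ * rexp (-cc n / t) by positivity)]
  have hA : |cc n / t^2 - 1/(2*t)| ≤ 4*cc n/t₀^2 + 1/t₀ := by
    refine (abs_sub _ _).trans ?_
    have hc := cc_nonneg n
    rw [abs_of_nonneg (div_nonneg hc (sq_nonneg t)),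
      abs_of_nonneg (by positivity : (0:ℝ) ≤ 1/(2*t))]
    have hsq : t₀^2 ≤ 4*t^2 := by nlinarith
    have b1 : cc n / t^2 ≤ 4*cc n/t₀^2 := by
      rw [div_le_div_iff₀ (by positivity) (by positivity)]
      nlinarith [mul_le_mul_of_nonneg_left hsq hc]
    have b2 : 1/(2*t) ≤ 1/t₀ := by
      rw [div_le_div_iff₀ (by positivity) ht₀]
      linarith
    linarith
  have hB1 : (Real.sqrt t)⁻¹ ≤ (Real.sqrt (t₀/2))⁻¹ :=
    inv_anti₀ (Real.sqrt_pos.mpr (by positivity)) (Real.sqrt_le_sqrt h1.le)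
  have hB2 : rexp (-cc n / t) ≤ rexp (-cc n/(2*t₀)) := by
    rw [Real.exp_le_exp, neg_div, neg_div, neg_le_neg_iff]
    rw [div_le_div_iff₀ (by positivity) htpos]
    nlinarith [cc_nonneg n]
  have hfac2 : (Real.sqrt t)⁻¹ * rexp (-cc n/t) ≤ (Real.sqrt (t₀/2))⁻¹ * rexp (-cc n/(2*t₀)) :=
    mul_le_mul hB1 hB2 (Real.exp_nonneg _) (by positivity)
  have hb : (0:ℝ) ≤ Real.sqrt (2*π) * (4*cc n/t₀^2 + 1/t₀) :=
    mul_nonneg (Real.sqrt_nonneg _) (add_nonneg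
      (div_nonneg (mul_nonneg (by norm_num) (cc_nonneg n)) (sq_nonneg t₀)) (by positivity))
  exact mul_le_mul (mul_le_mul_of_nonneg_left hA (Real.sqrt_nonneg _)) hfac2
    (by positivity) hb


lemma hasSum_G1 {t : ℝ} (ht : 0 < t) :
    HasSum (fun n : ℤ ↦ (-1 : ℝ) ^ n * rexp (-(n:ℝ)^2 * t / 2)) (G t) := by
  have ht' : 0 < t / (2*π) := div_pos ht (by positivity)
  have h := hasSum_int_cosKernel ((1:ℝ)/2) ht'
  rw [← Complex.hasSum_ofReal]
  have key : (fun n : ℤ ↦ ((((-1 : ℝ) ^ n * rexp (-(n:ℝ)^2 * t / 2)) : ℝ) : ℂ)) =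
      fun n : ℤ ↦ Complex.exp (2 * π * Complex.I * (((1:ℝ)/2 : ℝ):ℂ) * n) *
        ((rexp (-π * (n:ℝ) ^ 2 * (t/(2*π))) : ℝ) : ℂ) := by
    funext n
    have h1 : (2 * (π:ℂ) * Complex.I * (((1:ℝ)/2 : ℝ):ℂ) * n) = n * (π * Complex.I) := by
      push_cast; ring
    have h2 : -π * (n:ℝ)^2 * (t/(2*π)) = -(n:ℝ)^2 * t / 2 := by
      field_simp
    rw [h1, Complex.exp_int_mul, Complex.exp_pi_mul_I, h2]
    push_cast
    ring
  rw [key]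
  exact h

lemma G_eq {t : ℝ} (ht : 0 < t) :
    G t = Real.sqrt (2*π) * (Real.sqrt t)⁻¹ *
      evenKernel (((1:ℝ)/2 : ℝ) : UnitAddCircle) (2*π/t) := by
  have h1 := evenKernel_functional_equation (((1:ℝ)/2 : ℝ) : UnitAddCircle) (2*π/t)
  have h2 : 1 / (2*π/t) = t / (2*π) := one_div_div _ _
  have h3 : (1 : ℝ) / ((2*π/t) ^ ((1:ℝ)/2 : ℝ)) = (Real.sqrt (2*π) * (Real.sqrt t)⁻¹)⁻¹ := by
    rw [← Real.sqrt_eq_rpow, Real.sqrt_div (by positivity) t, one_div, div_eq_mul_inv,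
      mul_inv, inv_inv]
  rw [h2, h3] at h1
  have hne : (Real.sqrt (2*π) * (Real.sqrt t)⁻¹) ≠ 0 := by positivity
  rw [G]
  field_simp at h1 ⊢
  linarith [h1]

lemma hasSum_G2 {t : ℝ} (ht : 0 < t) :
    HasSum (fun n : ℤ ↦ Real.sqrt (2*π) * (Real.sqrt t)⁻¹ * rexp (-cc n / t)) (G t) := by
  have hx : 0 < 2*π/t := by positivity
  have h := (hasSum_int_evenKernel ((1:ℝ)/2) hx).mul_left (Real.sqrt (2*π) * (Real.sqrt t)⁻¹)
  rw [← G_eq ht] at h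
  refine h.congr_fun fun n ↦ ?_
  have : -π * ((n:ℝ)+(1:ℝ)/2)^2 * (2*π/t) = -cc n / t := by
    rw [cc]; field_simp
  rw [this]

lemma one_le_cc (n : ℤ) : 1 ≤ cc n := by
  have h1 := one_le_cc_aux n
  have hpi : (3:ℝ) ≤ π := Real.pi_gt_three.le
  have h2 : ((n:ℝ)+1/2)^2 = (2*(n:ℝ)+1)^2/4 := by ring
  rw [cc, h2]
  nlinarith

lemma hasDerivAt_G1 {t : ℝ} (ht : 0 < t) :
    HasDerivAt G (∑' n : ℤ, fd n t) t := by
  have hmem : t ∈ Ioo (t/2) (2*t) := ⟨by linarith, by linarith⟩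
  have hopen : IsOpen (Ioo (t/2) (2*t)) := isOpen_Ioo
  have hD : HasDerivAt (fun u ↦ ∑' n : ℤ, (-1:ℝ)^n * rexp (-(n:ℝ)^2 * u / 2))
      (∑' n : ℤ, fd n t) t := by
    refine hasDerivAt_tsum_of_isPreconnected (summable_u1 ht) hopen
      (convex_Ioo _ _).isPreconnected (fun n y _ ↦ hasDerivAt_f n y)
      (fun n y hy ↦ fd_bound hy n) hmem ?_ hmem
    exact (hasSum_G1 ht).summable
  refine hD.congr_of_eventuallyEq ?_
  filter_upwards [hopen.mem_nhds hmem] with y hy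
  have hy0 : 0 < y := lt_trans (by linarith) hy.1
  exact ((hasSum_G1 hy0).tsum_eq).symm

lemma hasDerivAt_G2 {t : ℝ} (ht : 0 < t) :
    HasDerivAt G (∑' n : ℤ, gd n t) t := by
  have hmem : t ∈ Ioo (t/2) (2*t) := ⟨by linarith, by linarith⟩
  have hopen : IsOpen (Ioo (t/2) (2*t)) := isOpen_Ioo
  have hD : HasDerivAt (fun u ↦ ∑' n : ℤ, Real.sqrt (2*π) * (Real.sqrt u)⁻¹ * rexp (-cc n / u))
      (∑' n : ℤ, gd n t) t := by
    refine hasDerivAt_tsum_of_isPreconnected (summable_u2 ht) hopen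
      (convex_Ioo _ _).isPreconnected
      (fun n y hy ↦ hasDerivAt_g n (lt_trans (by linarith) hy.1))
      (fun n y hy ↦ gd_bound ht hy n) hmem ?_ hmem
    exact (hasSum_G2 ht).summable
  refine hD.congr_of_eventuallyEq ?_
  filter_upwards [hopen.mem_nhds hmem] with y hy
  have hy0 : 0 < y := lt_trans (by linarith) hy.1
  exact ((hasSum_G2 hy0).tsum_eq).symm

lemma summable_fd {t : ℝ} (ht : 0 < t) : Summable (fun n : ℤ ↦ fd n t) :=
  Summable.of_norm_bounded (summable_u1 ht)
    (fun n ↦ fd_bound ⟨by linarith, by linarith⟩ n)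

lemma fd_neg (n : ℤ) (t : ℝ) : fd (-n) t = fd n t := by
  rw [fd, fd]
  have h1 : (-1:ℝ)^(-n) = (-1:ℝ)^n := by
    rw [zpow_neg, ← inv_zpow, inv_neg, inv_one]
  push_cast
  rw [h1]
  ring_nf

lemma hasSum_k {t : ℝ} (ht : 0 < t) :
    HasSum (fun n : ℕ ↦ (-1 : ℝ) ^ n * ((n : ℝ) + 1) ^ 2 *
      Real.exp (-((n : ℝ) + 1) ^ 2 * t / 2)) (∑' n : ℤ, fd n t) := by
  have hsum := (summable_fd ht).hasSum
  have h := hsum.nat_add_neg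
  have h0 : fd 0 t = 0 := by simp [fd]
  rw [h0, add_zero] at h
  have heq : (fun n : ℕ ↦ fd n t + fd (-(n:ℤ)) t) = fun n : ℕ ↦ 2 * fd n t := by
    funext n; rw [fd_neg]; ring
  rw [heq] at h
  have h2 : HasSum (fun n : ℕ ↦ 2 * fd ((n:ℤ)+1) t) (∑' n : ℤ, fd n t) := by
    have := (hasSum_nat_add_iff (f := fun n : ℕ ↦ 2 * fd (n:ℤ) t) 1).mpr
      (by simpa [h0] using h)
    refine this.congr_fun fun n ↦ ?_
    push_cast
    ring_nf
  refine h2.congr_fun fun n ↦ ?_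
  rw [fd]
  have h3 : (-1:ℝ)^((n:ℤ)+1) = -(-1:ℝ)^(n:ℕ) := by
    rw [zpow_add_one₀ (by norm_num : (-1:ℝ) ≠ 0), zpow_natCast]
    ring
  rw [h3]
  push_cast
  ring

lemma step {t x : ℝ} (ht : 2 ≤ t) (hx : 1 ≤ x) :
    (x+1)^2 * rexp (-(x+1)^2*t/2) ≤ x^2 * rexp (-x^2*t/2) := by
  have hsplit : rexp (-(x+1)^2*t/2) = rexp (-x^2*t/2) * rexp (-(2*x+1)*(t/2)) := by
    rw [← Real.exp_add]; ring_nf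
  rw [hsplit]
  suffices h : (x+1)^2 * rexp (-(2*x+1)*(t/2)) ≤ x^2 by
    calc (x+1)^2 * (rexp (-x^2*t/2) * rexp (-(2*x+1)*(t/2)))
        = ((x+1)^2 * rexp (-(2*x+1)*(t/2))) * rexp (-x^2*t/2) := by ring
      _ ≤ x^2 * rexp (-x^2*t/2) := mul_le_mul_of_nonneg_right h (Real.exp_nonneg _)
  have e2 : rexp (-(2*x+1)*(t/2)) ≤ rexp (-(2*x+1)) := by
    rw [Real.exp_le_exp]; nlinarith
  have e4 : 2*x+2 ≤ rexp (2*x+1) := by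
    have := Real.add_one_le_exp (2*x+1); linarith
  have e5 : rexp (-(2*x+1)) ≤ 1/(2*x+2) := by
    rw [Real.exp_neg, one_div]
    exact inv_anti₀ (by linarith) e4
  calc (x+1)^2 * rexp (-(2*x+1)*(t/2)) ≤ (x+1)^2 * (1/(2*x+2)) :=
        mul_le_mul_of_nonneg_left (e2.trans e5) (by positivity)
    _ = (x+1)/2 := by field_simp
    _ ≤ x^2 := by nlinarith

lemma k_nonneg {t : ℝ} (ht : 0 < t) :
    0 ≤ ∑' n : ℕ, (-1 : ℝ) ^ n * ((n : ℝ) + 1) ^ 2 *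
      Real.exp (-((n : ℝ) + 1) ^ 2 * t / 2) := by
  rcases le_or_gt t 2 with hle | hgt
  · rw [(hasSum_k ht).tsum_eq,
      HasDerivAt.unique (hasDerivAt_G1 ht) (hasDerivAt_G2 ht)]
    refine tsum_nonneg fun n ↦ ?_
    rw [gd]
    have h1 : 0 ≤ cc n / t^2 - 1/(2*t) := by
      rw [sub_nonneg, div_le_div_iff₀ (by positivity) (by positivity)]
      nlinarith [one_le_cc n]
    positivity
  · set f : ℕ → ℝ := fun n ↦ (-1:ℝ)^n * ((n:ℝ)+1)^2 * rexp (-((n:ℝ)+1)^2 * t/2) with hf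
    have hs : Summable f := (hasSum_k ht).summable
    have he : Summable fun k ↦ f (2*k) := hs.comp_injective fun a b h ↦ by omega
    have ho : Summable fun k ↦ f (2*k+1) := hs.comp_injective fun a b h ↦ by omega
    rw [show (∑' n : ℕ, (-1 : ℝ) ^ n * ((n : ℝ) + 1) ^ 2 *
        Real.exp (-((n : ℝ) + 1) ^ 2 * t / 2)) = ∑' n, f n from rfl,
      ← tsum_even_add_odd he ho]
    have hev : ∀ k : ℕ, f (2*k) = (2*(k:ℝ)+1)^2 * rexp (-(2*(k:ℝ)+1)^2*t/2) := by
      intro k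
      rw [hf]
      simp only
      rw [Even.neg_one_pow ⟨k, by ring⟩]
      push_cast
      ring_nf
    have hod : ∀ k : ℕ, f (2*k+1) =
        -((2*(k:ℝ)+1+1)^2 * rexp (-(2*(k:ℝ)+1+1)^2*t/2)) := by
      intro k
      rw [hf]
      simp only
      rw [Odd.neg_one_pow ⟨k, rfl⟩]
      push_cast
      ring_nf
    have ha : Summable fun k : ℕ ↦ (2*(k:ℝ)+1)^2 * rexp (-(2*(k:ℝ)+1)^2*t/2) :=
      he.congr hev
    have hb : Summable fun k : ℕ ↦ (2*(k:ℝ)+1+1)^2 * rexp (-(2*(k:ℝ)+1+1)^2*t/2) := by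
      have := (ho.congr hod).neg
      simpa using this
    have hle2 : (∑' k : ℕ, (2*(k:ℝ)+1+1)^2 * rexp (-(2*(k:ℝ)+1+1)^2*t/2)) ≤
        ∑' k : ℕ, (2*(k:ℝ)+1)^2 * rexp (-(2*(k:ℝ)+1)^2*t/2) := by
      refine Summable.tsum_le_tsum (fun k ↦ ?_) hb ha
      exact step hgt.le (by have : (0:ℝ) ≤ (k:ℝ) := Nat.cast_nonneg k; linarith)
    have heq1 : (∑' k : ℕ, f (2*k)) =
        ∑' k : ℕ, (2*(k:ℝ)+1)^2 * rexp (-(2*(k:ℝ)+1)^2*t/2) := tsum_congr hev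
    have heq2 : (∑' k : ℕ, f (2*k+1)) =
        -∑' k : ℕ, (2*(k:ℝ)+1+1)^2 * rexp (-(2*(k:ℝ)+1+1)^2*t/2) := by
      rw [tsum_congr hod, tsum_neg]
    rw [heq1, heq2]
    linarith

lemma G_zero : G 0 = 0 := by
  rw [G, zero_div]
  exact cosKernel_undef _ le_rfl

lemma tendsto_exp_neg_const_mul {p : ℝ} (hp : 0 < p) :
    Tendsto (fun x : ℝ ↦ rexp (-p * x)) atTop (𝓝 0) := by
  apply Real.tendsto_exp_atBot.comp
  have h1 : Tendsto (fun x : ℝ ↦ p * x) atTop atTop :=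
    (tendsto_const_mul_atTop_of_pos hp).mpr tendsto_id
  have h2 := tendsto_neg_atTop_atBot.comp h1
  refine h2.congr fun x ↦ ?_
  simp [Function.comp, neg_mul]

lemma tendsto_G_atTop : Tendsto G atTop (𝓝 1) := by
  obtain ⟨p, hp, hO⟩ := isBigO_atTop_cosKernel_sub (((1:ℝ)/2 : ℝ) : UnitAddCircle)
  have h0 : Tendsto (fun x ↦ cosKernel (((1:ℝ)/2 : ℝ) : UnitAddCircle) x - 1) atTop (𝓝 0) :=
    hO.trans_tendsto (tendsto_exp_neg_const_mul hp)
  have h1 : Tendsto (cosKernel (((1:ℝ)/2 : ℝ) : UnitAddCircle)) atTop (𝓝 1) := by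
    have := h0.add_const 1
    simpa using this
  have h2 : Tendsto (fun t : ℝ ↦ t / (2*π)) atTop atTop :=
    tendsto_id.atTop_div_const (by positivity)
  exact h1.comp h2

lemma G_eq' {t : ℝ} (ht : 0 < t) :
    G t = Real.sqrt (2*π/t) * evenKernel (((1:ℝ)/2 : ℝ) : UnitAddCircle) (2*π/t) := by
  rw [G_eq ht, Real.sqrt_div (by positivity : (0:ℝ) ≤ 2*π) t]
  ring


lemma tendsto_G_zero : Tendsto G (𝓝[>] (0:ℝ)) (𝓝 0) := by
  obtain ⟨p, hp, hO⟩ := isBigO_atTop_evenKernel_sub (((1:ℝ)/2 : ℝ) : UnitAddCircle)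
  rw [if_neg half_ne_zero] at hO
  have hO' : (fun y ↦ evenKernel (((1:ℝ)/2 : ℝ) : UnitAddCircle) y) =O[atTop]
      fun y ↦ rexp (-p * y) := by
    simpa using hO
  have hsq : (fun y : ℝ ↦ Real.sqrt y *
      evenKernel (((1:ℝ)/2 : ℝ) : UnitAddCircle) y) =O[atTop]
      fun y : ℝ ↦ Real.sqrt y * rexp (-p * y) :=
    (isBigO_refl (fun y : ℝ ↦ Real.sqrt y) atTop).mul hO'
  have hlim : Tendsto (fun y : ℝ ↦ Real.sqrt y * rexp (-p * y)) atTop (𝓝 0) := by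
    have h := tendsto_rpow_mul_exp_neg_mul_atTop_nhds_zero (1/2) p hp
    refine h.congr' ?_
    filter_upwards [eventually_ge_atTop (0:ℝ)] with y hy
    rw [Real.sqrt_eq_rpow]
  have hG : Tendsto (fun y : ℝ ↦ Real.sqrt y *
      evenKernel (((1:ℝ)/2 : ℝ) : UnitAddCircle) y) atTop (𝓝 0) :=
    hsq.trans_tendsto hlim
  have hcomp : Tendsto (fun t : ℝ ↦ 2*π/t) (𝓝[>] (0:ℝ)) atTop := by
    simp_rw [div_eq_mul_inv]
    exact (tendsto_const_mul_atTop_of_pos (by positivity)).mpr tendsto_inv_nhdsGT_zero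
  refine (hG.comp hcomp).congr' ?_
  filter_upwards [self_mem_nhdsWithin] with t (htpos : 0 < t)
  simp only [Function.comp]
  exact (G_eq' htpos).symm

end KSaux

open MeasureTheory Real Set in
/-- The Kolmogorov–Smirnov density `k(v) = ∑_{n ≥ 1} (-1)^{n+1} n² e^{-n²v/2}` is a
probability density on `(0, ∞)`. -/
theorem kolmogorov_smirnov_is_density :
    (∀ v : ℝ, 0 < v →
        0 ≤ ∑' n : ℕ, (-1 : ℝ) ^ n * ((n : ℝ) + 1) ^ 2 *
          Real.exp (-((n : ℝ) + 1) ^ 2 * v / 2)) ∧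
      (∫ v in Ioi (0 : ℝ),
          ∑' n : ℕ, (-1 : ℝ) ^ n * ((n : ℝ) + 1) ^ 2 *
            Real.exp (-((n : ℝ) + 1) ^ 2 * v / 2)) = 1 := by
  constructor
  · exact fun v hv ↦ KSaux.k_nonneg hv
  · have hderiv : ∀ x ∈ Ioi (0:ℝ), HasDerivAt KSaux.G
        (∑' n : ℕ, (-1 : ℝ) ^ n * ((n : ℝ) + 1) ^ 2 *
          Real.exp (-((n : ℝ) + 1) ^ 2 * x / 2)) x := by
      intro x hx
      have h := KSaux.hasDerivAt_G1 hx
      rwa [← (KSaux.hasSum_k hx).tsum_eq] at h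
    have hcont : ContinuousWithinAt KSaux.G (Ici 0) 0 := by
      rw [← continuousWithinAt_Ioi_iff_Ici]
      show Filter.Tendsto _ _ (nhds (KSaux.G 0))
      rw [KSaux.G_zero]
      exact KSaux.tendsto_G_zero
    rw [MeasureTheory.integral_Ioi_of_hasDerivAt_of_nonneg hcont hderiv
      (fun x hx ↦ KSaux.k_nonneg hx) KSaux.tendsto_G_atTop, KSaux.G_zero, sub_zero]
end
end

section
/- Let μ be a probability measure on (0,∞) such that f(x) = ∫₀^∞ e^{-x²/(2v)} μ(dv)/√(2πv) is in L²(ℝ). For t > 0 set I(t) = ∫_ℝ [f(x) - (2πt)^{-1/2} e^{-x²/(2t)}]² dx. Then I'(t) = (√2/π)·Γ(3/2)·t^{-3/2}·[F(1/t) - 2^{-3/2}], where F(y) = ∫₀^∞ (1+vy)^{-3/2} μ(dv). In particular, a point t > 0 is a critical point of I if and only if ∫₀^∞ (t+v)^{-3/2} μ(dv) = (2t)^{-3/2}. -/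
open MeasureTheory Real Set Metric

lemma rpow_neg_half' (a : ℝ) (ha : 0 < a) : a ^ (-(1:ℝ)/2) = 1 / Real.sqrt a := by
  rw [neg_div, Real.rpow_neg ha.le, Real.sqrt_eq_rpow, one_div]
  norm_num

lemma rpow_neg_threehalf' (a : ℝ) (ha : 0 < a) : a ^ (-(3:ℝ)/2) = 1 / (Real.sqrt a * a) := by
  rw [show (-(3:ℝ)/2) = (-(1:ℝ)/2) + (-1 : ℝ) by norm_num, Real.rpow_add ha,
    Real.rpow_neg_one, neg_div, Real.rpow_neg ha.le, Real.sqrt_eq_rpow]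
  norm_num
  rw [mul_comm]

lemma gauss_cross' (v s : ℝ) (hv : 0 < v) (hs : 0 < s) :
    ∫ x : ℝ, Real.exp (-x ^ 2 / (2 * v)) / Real.sqrt (2 * π * v) *
      (1 / Real.sqrt (2 * π * s) * Real.exp (-x ^ 2 / (2 * s))) =
    (2 * π * (s + v)) ^ (-(1:ℝ)/2) := by
  have hπ := Real.pi_pos
  have hc : 0 < 1/(2*v) + 1/(2*s) := by positivity
  have h1 : ∀ x : ℝ, Real.exp (-x ^ 2 / (2 * v)) / Real.sqrt (2 * π * v) *
      (1 / Real.sqrt (2 * π * s) * Real.exp (-x ^ 2 / (2 * s))) =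
      (1 / (Real.sqrt (2 * π * v) * Real.sqrt (2 * π * s))) *
        Real.exp (-(1/(2*v) + 1/(2*s)) * x ^ 2) := by
    intro x
    have h2 : -(1/(2*v) + 1/(2*s)) * x ^ 2 = (-x^2/(2*v)) + (-x^2/(2*s)) := by
      field_simp; ring
    rw [h2, Real.exp_add]; ring
  simp_rw [h1]
  rw [MeasureTheory.integral_const_mul, integral_gaussian]
  rw [rpow_neg_half' _ (by positivity)]
  have key : π / (1/(2*v)+1/(2*s)) = (2*π*v) * (2*π*s) / (2*π*(s+v)) := by
    field_simp
  rw [key, Real.sqrt_div (by positivity : (0:ℝ) ≤ (2*π*v)*(2*π*s)),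
    Real.sqrt_mul (by positivity : (0:ℝ) ≤ 2*π*v)]
  have h6 : Real.sqrt (2*π*(s+v)) ≠ 0 := by positivity
  have h8 : Real.sqrt (2*π*v) ≠ 0 := by positivity
  have h9 : Real.sqrt (2*π*s) ≠ 0 := by positivity
  field_simp

lemma gauss_sq' (s : ℝ) (hs : 0 < s) :
    ∫ x : ℝ, (1 / Real.sqrt (2 * π * s) * Real.exp (-x ^ 2 / (2 * s))) ^ 2 =
      (1/2) * (π * s) ^ (-(1:ℝ)/2) := by
  have hπ := Real.pi_pos
  have h1 : ∀ x : ℝ, (1 / Real.sqrt (2 * π * s) * Real.exp (-x ^ 2 / (2 * s))) ^ 2 =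
      (1 / (2 * π * s)) * Real.exp (-(1/s) * x ^ 2) := by
    intro x
    rw [mul_pow, ← Real.exp_nat_mul]
    rw [div_pow, one_pow, Real.sq_sqrt (by positivity)]
    congr 1
    push_cast; field_simp
  simp_rw [h1]
  rw [MeasureTheory.integral_const_mul, integral_gaussian, rpow_neg_half' _ (by positivity)]
  rw [show π / (1/s) = π * s by field_simp]
  have hp : Real.sqrt π * Real.sqrt π = π := Real.mul_self_sqrt hπ.le
  have hs' : Real.sqrt s * Real.sqrt s = s := Real.mul_self_sqrt hs.le
  have h2 : Real.sqrt (π*s) ≠ 0 := by positivity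
  field_simp
  nlinarith [hp, hs', Real.sq_sqrt (by positivity : (0:ℝ) ≤ π*s)]

lemma gauss_memℒp' (s : ℝ) (hs : 0 < s) :
    MemLp (fun x : ℝ => 1 / Real.sqrt (2 * π * s) * Real.exp (-x ^ 2 / (2 * s))) 2 volume := by
  have hπ := Real.pi_pos
  have hcont : Continuous (fun x : ℝ => 1 / Real.sqrt (2 * π * s) * Real.exp (-x ^ 2 / (2 * s))) := by
    continuity
  rw [memLp_two_iff_integrable_sq hcont.aestronglyMeasurable]
  have h1 : ∀ x : ℝ, (1 / Real.sqrt (2 * π * s) * Real.exp (-x ^ 2 / (2 * s))) ^ 2 =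
      (1 / (2 * π * s)) * Real.exp (-(1/s) * x ^ 2) := by
    intro x
    rw [mul_pow, ← Real.exp_nat_mul]
    rw [div_pow, one_pow, Real.sq_sqrt (by positivity)]
    congr 1
    push_cast; field_simp
  simp_rw [h1]
  exact (integrable_exp_neg_mul_sq (by positivity : (0:ℝ) < 1/s)).const_mul _

lemma cross_fubini' (μ : Measure ℝ) [IsProbabilityMeasure μ] (hpos : ∀ᵐ v ∂μ, 0 < v)
    (s : ℝ) (hs : 0 < s) :
    ∫ x : ℝ, (∫ v, Real.exp (-x ^ 2 / (2 * v)) / Real.sqrt (2 * π * v) ∂μ) *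
      (1 / Real.sqrt (2 * π * s) * Real.exp (-x ^ 2 / (2 * s))) =
    ∫ v, (2 * π * (s + v)) ^ (-(1:ℝ)/2) ∂μ := by
  have hπ := Real.pi_pos
  set K : ℝ → ℝ → ℝ := fun v x => Real.exp (-x ^ 2 / (2 * v)) / Real.sqrt (2 * π * v) *
      (1 / Real.sqrt (2 * π * s) * Real.exp (-x ^ 2 / (2 * s))) with hK
  have hKnonneg : ∀ v x, 0 ≤ K v x := by
    intro v x
    apply mul_nonneg (div_nonneg (Real.exp_pos _).le (Real.sqrt_nonneg _))
    positivity
  have hKmeas : AEStronglyMeasurable (Function.uncurry K) (μ.prod volume) := by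
    apply Measurable.aestronglyMeasurable
    apply Measurable.mul
    · exact (measurable_snd.pow_const 2 |>.neg.div
        (measurable_fst.const_mul 2)).exp.div
        ((measurable_fst.const_mul (2*π)).sqrt)
    · exact ((measurable_snd.pow_const 2 |>.neg.div_const (2*s)).exp.const_mul _)
  have hint_x : ∀ᵐ v ∂μ, Integrable (fun x => K v x) volume := by
    filter_upwards [hpos] with v hv
    have h1 : ∀ x : ℝ, K v x =
        (1 / (Real.sqrt (2 * π * v) * Real.sqrt (2 * π * s))) *
          Real.exp (-(1/(2*v) + 1/(2*s)) * x ^ 2) := by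
      intro x
      have h2 : -(1/(2*v) + 1/(2*s)) * x ^ 2 = (-x^2/(2*v)) + (-x^2/(2*s)) := by
        field_simp; ring
      rw [hK]; simp only []; rw [h2, Real.exp_add]; ring
    simp_rw [h1]
    exact (integrable_exp_neg_mul_sq (by positivity : (0:ℝ) < 1/(2*v) + 1/(2*s))).const_mul _
  have hcross : ∀ᵐ v ∂μ, ∫ x, K v x = (2 * π * (s + v)) ^ (-(1:ℝ)/2) := by
    filter_upwards [hpos] with v hv
    exact gauss_cross' v s hv hs
  have hKint : Integrable (Function.uncurry K) (μ.prod volume) := by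
    rw [integrable_prod_iff hKmeas]
    refine ⟨hint_x, ?_⟩
    have heq : ∀ᵐ v ∂μ, (fun v => ∫ x, ‖K v x‖) v = (2 * π * (s + v)) ^ (-(1:ℝ)/2) := by
      filter_upwards [hcross] with v hv
      simp only [Real.norm_eq_abs]
      rw [← hv]
      congr 1; funext x; exact abs_of_nonneg (hKnonneg v x)
    apply Integrable.mono' (g := fun _ => (2*π*s) ^ (-(1:ℝ)/2)) (integrable_const _)
    · exact hKmeas.norm.integral_prod_right'
    · filter_upwards [heq, hpos] with v hv hv0
      simp only [Function.uncurry] at *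
      rw [Real.norm_eq_abs, abs_of_nonneg (by positivity : (0:ℝ) ≤ ∫ x, ‖K v x‖), hv]
      apply Real.rpow_le_rpow_of_nonpos (by positivity) (by nlinarith) (by norm_num)
  have hpt : ∀ x : ℝ, (∫ v, Real.exp (-x ^ 2 / (2 * v)) / Real.sqrt (2 * π * v) ∂μ) *
      (1 / Real.sqrt (2 * π * s) * Real.exp (-x ^ 2 / (2 * s))) = ∫ v, K v x ∂μ :=
    fun x => (integral_mul_const _ _).symm
  simp_rw [hpt]
  rw [← MeasureTheory.integral_integral_swap hKint]
  exact integral_congr_ae hcross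

lemma deriv_B' (μ : Measure ℝ) [IsProbabilityMeasure μ] (hpos : ∀ᵐ v ∂μ, 0 < v)
    (t : ℝ) (ht : 0 < t) :
    HasDerivAt (fun s => ∫ v, (2 * π * (s + v)) ^ (-(1:ℝ)/2) ∂μ)
      (∫ v, -π * (2 * π * (t + v)) ^ (-(3:ℝ)/2) ∂μ) t := by
  have hπ := Real.pi_pos
  have hmeas : ∀ s : ℝ, AEStronglyMeasurable (fun v : ℝ => (2 * π * (s + v)) ^ (-(1:ℝ)/2)) μ := by
    intro s
    exact (by fun_prop : Measurable (fun v : ℝ => (2 * π * (s + v)) ^ (-(1:ℝ)/2))).aestronglyMeasurable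
  have key := hasDerivAt_integral_of_dominated_loc_of_deriv_le (μ := μ)
    (F := fun s v => (2 * π * (s + v)) ^ (-(1:ℝ)/2))
    (F' := fun s v => -π * (2 * π * (s + v)) ^ (-(3:ℝ)/2))
    (x₀ := t) (s := ball t (t/2)) (bound := fun _ => π * (π * t) ^ (-(3:ℝ)/2))
    (ball_mem_nhds t (by positivity))
    (Filter.Eventually.of_forall fun s => hmeas s)
    ?_ ?_ ?_ (integrable_const _) ?_
  · exact key.2
  · apply Integrable.mono' (g := fun _ => (2*π*t) ^ (-(1:ℝ)/2)) (integrable_const _) (hmeas t)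
    filter_upwards [hpos] with v hv
    rw [Real.norm_eq_abs, abs_of_nonneg (Real.rpow_nonneg (by positivity) _)]
    exact Real.rpow_le_rpow_of_nonpos (by positivity) (by nlinarith) (by norm_num)
  · exact (by fun_prop : Measurable (fun v : ℝ => -π * (2 * π * (t + v)) ^ (-(3:ℝ)/2))).aestronglyMeasurable
  · filter_upwards [hpos] with v hv
    intro s hsb
    have hst : t/2 < s := by
      linarith [(abs_lt.1 (by simpa [Real.norm_eq_abs] using mem_ball_iff_norm.1 hsb)).1]
    have hb0 : (0:ℝ) ≤ 2 * π * (s + v) := by nlinarith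
    rw [Real.norm_eq_abs, abs_mul, abs_of_nonneg (Real.rpow_nonneg hb0 _),
      abs_neg, abs_of_nonneg hπ.le]
    have : (2 * π * (s + v)) ^ (-(3:ℝ)/2) ≤ (π * t) ^ (-(3:ℝ)/2) := by
      apply Real.rpow_le_rpow_of_nonpos (by positivity) (by nlinarith) (by norm_num)
    nlinarith [Real.rpow_nonneg (show (0:ℝ) ≤ π*t by positivity) (-(3:ℝ)/2)]
  · filter_upwards [hpos] with v hv
    intro s hsb
    have hst : t/2 < s := by
      linarith [(abs_lt.1 (by simpa [Real.norm_eq_abs] using mem_ball_iff_norm.1 hsb)).1]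
    have hbase : (2 * π * (s + v)) ≠ 0 := by nlinarith
    have h1 : HasDerivAt (fun u : ℝ => 2 * π * (u + v)) (2*π) s := by
      simpa using ((hasDerivAt_id s).add_const v).const_mul (2*π)
    have h2 := (Real.hasDerivAt_rpow_const (x := 2 * π * (s + v)) (p := -(1:ℝ)/2)
      (Or.inl hbase)).comp s h1
    refine h2.congr_deriv ?_
    rw [show (-(1:ℝ)/2 - 1) = -(3:ℝ)/2 by norm_num]
    ring

lemma integrable_mul_of_L2' (f g : ℝ → ℝ) (hf : MemLp f 2 volume) (hg : MemLp g 2 volume) :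
    Integrable (fun x => f x * g x) volume := by
  apply Integrable.mono' ((hf.integrable_sq.add hg.integrable_sq).div_const 2)
    (hf.aestronglyMeasurable.mul hg.aestronglyMeasurable)
  filter_upwards with x
  simp only [Pi.add_apply, Pi.mul_apply, Real.norm_eq_abs, abs_mul]
  nlinarith [sq_abs (f x), sq_abs (g x), sq_nonneg (|f x| - |g x|), abs_nonneg (f x), abs_nonneg (g x)]

lemma sq_expand' (f g : ℝ → ℝ) (hf : MemLp f 2 volume) (hg : MemLp g 2 volume) :
    ∫ x, (f x - g x) ^ 2 =
      (∫ x, f x ^ 2) - 2 * (∫ x, f x * g x) + ∫ x, g x ^ 2 := by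
  have hfg := integrable_mul_of_L2' f g hf hg
  have hf2 := hf.integrable_sq
  have hg2 := hg.integrable_sq
  have h1 : ∀ x, (f x - g x) ^ 2 = (f x ^ 2 - 2 * (f x * g x)) + g x ^ 2 := by intro x; ring
  simp_rw [h1]
  have hA : Integrable (fun x => f x ^ 2 - 2 * (f x * g x)) volume := hf2.sub (hfg.const_mul 2)
  rw [integral_add hA hg2, integral_sub hf2 (hfg.const_mul 2), MeasureTheory.integral_const_mul]

lemma coef_eq' : Real.sqrt 2 / π * Real.Gamma (3/2) = 1 / Real.sqrt (2*π) := by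
  have hπ := Real.pi_pos
  have h1 : Real.Gamma (3/2) = (1/2) * Real.sqrt π := by
    rw [show (3/2 : ℝ) = 1/2 + 1 by norm_num, Real.Gamma_add_one (by norm_num),
      Real.Gamma_one_half_eq]
  rw [h1, Real.sqrt_mul (by norm_num : (0:ℝ) ≤ 2)]
  have h2 : Real.sqrt π * Real.sqrt π = π := Real.mul_self_sqrt hπ.le
  have h3 : Real.sqrt π ≠ 0 := by positivity
  have h4 : Real.sqrt 2 ≠ 0 := by positivity
  field_simp
  nlinarith [Real.mul_self_sqrt (show (0:ℝ) ≤ 2 by norm_num)]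

lemma S2' (t : ℝ) (ht : 0 < t) :
    (1/2) * ((-(1:ℝ)/2) * (π*t) ^ (-(1:ℝ)/2 - 1) * π) =
      -(1 / Real.sqrt (2*π)) * (2*t) ^ (-(3:ℝ)/2) := by
  have hπ := Real.pi_pos
  rw [show (-(1:ℝ)/2 - 1) = -(3:ℝ)/2 by norm_num,
    rpow_neg_threehalf' _ (by positivity), rpow_neg_threehalf' _ (by positivity),
    Real.sqrt_mul (by positivity : (0:ℝ) ≤ π), Real.sqrt_mul (by norm_num : (0:ℝ) ≤ 2),
    Real.sqrt_mul (by norm_num : (0:ℝ) ≤ 2)]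
  have h2 : Real.sqrt 2 * Real.sqrt 2 = 2 := Real.mul_self_sqrt (by norm_num)
  have h3 : Real.sqrt π * Real.sqrt π = π := Real.mul_self_sqrt hπ.le
  have h4 : Real.sqrt t * Real.sqrt t = t := Real.mul_self_sqrt ht.le
  have n1 : Real.sqrt 2 ≠ 0 := by positivity
  have n2 : Real.sqrt π ≠ 0 := by positivity
  have n3 : Real.sqrt t ≠ 0 := by positivity
  field_simp
  linear_combination (-1) * h2

lemma pointS1' (t v : ℝ) (ht : 0 < t) (hv : 0 < v) :
    -π * (2*π*(t+v)) ^ (-(3:ℝ)/2) = -((1/2) * (1/Real.sqrt (2*π))) * (t+v) ^ (-(3:ℝ)/2) := by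
  have hπ := Real.pi_pos
  rw [rpow_neg_threehalf' _ (by positivity), rpow_neg_threehalf' _ (by positivity),
    Real.sqrt_mul (by positivity : (0:ℝ) ≤ 2*π)]
  have h2 : Real.sqrt (2*π) * Real.sqrt (2*π) = 2*π := Real.mul_self_sqrt (by positivity)
  have n1 : Real.sqrt (2*π) ≠ 0 := by positivity
  have n2 : Real.sqrt (t+v) ≠ 0 := by positivity
  have n3 : (t+v) ≠ 0 := by positivity
  field_simp

/-- Derivative of the L² discrepancy `I(t)` between the Gaussian scale mixture density `f`
and the `N(0,t)` density, and characterization of critical points. -/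
theorem deriv_of_L2_discrepancy
    (μ : Measure ℝ) [IsProbabilityMeasure μ] (hμ : μ (Iic 0) = 0)
    (f : ℝ → ℝ)
    (hf : ∀ x, f x = ∫ v, Real.exp (-x ^ 2 / (2 * v)) / Real.sqrt (2 * π * v) ∂μ)
    (hL2 : MemLp f 2 volume)
    (I : ℝ → ℝ)
    (hI : ∀ t, I t =
        ∫ x, (f x - (1 / Real.sqrt (2 * π * t)) * Real.exp (-x ^ 2 / (2 * t))) ^ 2)
    (F : ℝ → ℝ)
    (hF : ∀ y, F y = ∫ v, (1 + v * y) ^ (-(3 : ℝ) / 2) ∂μ)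
    (t : ℝ) (ht : 0 < t) :
    HasDerivAt I
        (Real.sqrt 2 / π * Real.Gamma (3 / 2) * t ^ (-(3 : ℝ) / 2) *
          (F (1 / t) - 2 ^ (-(3 : ℝ) / 2))) t ∧
      (Real.sqrt 2 / π * Real.Gamma (3 / 2) * t ^ (-(3 : ℝ) / 2) *
            (F (1 / t) - 2 ^ (-(3 : ℝ) / 2)) = 0 ↔
        (∫ v, (t + v) ^ (-(3 : ℝ) / 2) ∂μ) = (2 * t) ^ (-(3 : ℝ) / 2)) := by
  have hπ := Real.pi_pos
  have hpos : ∀ᵐ v ∂μ, 0 < v := by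
    rw [ae_iff]
    convert hμ using 2
    ext v; simp [not_lt]
  -- the E-form of the claimed derivative
  have hDform : Real.sqrt 2 / π * Real.Gamma (3/2) * t ^ (-(3:ℝ)/2) * (F (1/t) - 2 ^ (-(3:ℝ)/2))
      = (1/Real.sqrt (2*π)) * ((∫ v, (t+v) ^ (-(3:ℝ)/2) ∂μ) - (2*t) ^ (-(3:ℝ)/2)) := by
    rw [coef_eq', hF]
    have hS3 : t ^ (-(3:ℝ)/2) * (∫ v, (1 + v * (1/t)) ^ (-(3:ℝ)/2) ∂μ)
        = ∫ v, (t+v) ^ (-(3:ℝ)/2) ∂μ := by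
      rw [← MeasureTheory.integral_const_mul]
      apply integral_congr_ae
      filter_upwards [hpos] with v hv
      have h1 : (0:ℝ) ≤ 1 + v * (1/t) := by positivity
      rw [← Real.mul_rpow ht.le h1]
      congr 1; field_simp
    have hS4 : t ^ (-(3:ℝ)/2) * (2:ℝ) ^ (-(3:ℝ)/2) = (2*t) ^ (-(3:ℝ)/2) := by
      rw [← Real.mul_rpow ht.le (by norm_num : (0:ℝ) ≤ 2)]; ring_nf
    rw [show (1/Real.sqrt (2*π)) * t ^ (-(3:ℝ)/2) *
        ((∫ v, (1 + v * (1/t)) ^ (-(3:ℝ)/2) ∂μ) - 2 ^ (-(3:ℝ)/2)) =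
      (1/Real.sqrt (2*π)) * ((t ^ (-(3:ℝ)/2) * ∫ v, (1 + v * (1/t)) ^ (-(3:ℝ)/2) ∂μ)
        - t ^ (-(3:ℝ)/2) * 2 ^ (-(3:ℝ)/2)) from by ring, hS3, hS4]
  constructor
  · -- compute the derivative
    set A := ∫ x, (f x)^2 with hA
    have hIJ : ∀ s, 0 < s → I s = A - 2 * (∫ v, (2*π*(s+v)) ^ (-(1:ℝ)/2) ∂μ)
        + (1/2) * (π*s) ^ (-(1:ℝ)/2) := by
      intro s hs
      rw [hI s, sq_expand' f _ hL2 (gauss_memℒp' s hs), gauss_sq' s hs]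
      have hcross : (∫ x, f x * (1 / Real.sqrt (2 * π * s) * Real.exp (-x ^ 2 / (2 * s))))
          = ∫ v, (2*π*(s+v)) ^ (-(1:ℝ)/2) ∂μ := by
        simp_rw [hf]
        exact cross_fubini' μ hpos s hs
      rw [hcross]
    have hWEQ : I =ᶠ[nhds t] (fun s => A - 2 * (∫ v, (2*π*(s+v)) ^ (-(1:ℝ)/2) ∂μ)
        + (1/2) * (π*s) ^ (-(1:ℝ)/2)) := by
      filter_upwards [Ioi_mem_nhds ht] with s hs
      exact hIJ s hs
    have hB := deriv_B' μ hpos t ht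
    have hJd : HasDerivAt (fun s => A - 2 * (∫ v, (2*π*(s+v)) ^ (-(1:ℝ)/2) ∂μ)
        + (1/2) * (π*s) ^ (-(1:ℝ)/2))
        (0 - 2 * (∫ v, -π * (2*π*(t+v)) ^ (-(3:ℝ)/2) ∂μ)
          + (1/2) * ((-(1:ℝ)/2) * (π*t) ^ (-(1:ℝ)/2 - 1) * π)) t := by
      apply HasDerivAt.add
      · exact (hasDerivAt_const t A).sub (hB.const_mul 2)
      · have h1 : HasDerivAt (fun s:ℝ => π*s) π t := by
          simpa using (hasDerivAt_id t).const_mul π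
        exact ((Real.hasDerivAt_rpow_const (x := π*t) (p := -(1:ℝ)/2)
          (Or.inl (by positivity))).comp t h1).const_mul (1/2)
    have hderivI := hJd.congr_of_eventuallyEq hWEQ
    have hval : 0 - 2 * (∫ v, -π * (2*π*(t+v)) ^ (-(3:ℝ)/2) ∂μ)
          + (1/2) * ((-(1:ℝ)/2) * (π*t) ^ (-(1:ℝ)/2 - 1) * π)
        = Real.sqrt 2 / π * Real.Gamma (3/2) * t ^ (-(3:ℝ)/2) * (F (1/t) - 2 ^ (-(3:ℝ)/2)) := by
      rw [S2' t ht]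
      have hS1 : ∫ v, -π * (2*π*(t+v)) ^ (-(3:ℝ)/2) ∂μ
          = -((1/2) * (1/Real.sqrt (2*π))) * ∫ v, (t+v) ^ (-(3:ℝ)/2) ∂μ := by
        rw [← MeasureTheory.integral_const_mul]
        apply integral_congr_ae
        filter_upwards [hpos] with v hv
        exact pointS1' t v ht hv
      rw [hS1, hDform]; ring
    rwa [hval] at hderivI
  · rw [hDform, mul_eq_zero, sub_eq_zero]
    have hne : (1:ℝ)/Real.sqrt (2*π) ≠ 0 := by positivity
    constructor
    · rintro (h | h)
      · exact absurd h hne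
      · exact h
    · exact fun h => Or.inr h
end

section
/- Let μ be a probability measure on the cone 𝒫 of n×n positive definite matrices, and f the density of V^{1/2}Z with V ~ μ independent of Z ~ N(0, I_n). Then f ∈ L²(ℝⁿ) if and only if E[det(V+V₁)^{-1/2}] < ∞ for independent V, V₁ ~ μ, and in that case ∫_{ℝⁿ} f² dx = (2π)^{-n/2} E[det(V+V₁)^{-1/2}]. -/
open MeasureTheory Real Matrix

noncomputable instance matrixMeasurableSpace (n : ℕ) :
    MeasurableSpace (Matrix (Fin n) (Fin n) ℝ) := borel _

instance matrixBorelSpace (n : ℕ) : BorelSpace (Matrix (Fin n) (Fin n) ℝ) := ⟨rfl⟩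

instance matrixSecondCountable (n : ℕ) :
    SecondCountableTopology (Matrix (Fin n) (Fin n) ℝ) :=
  inferInstanceAs (SecondCountableTopology (Fin n → Fin n → ℝ))

namespace GaussMix

variable {n : ℕ}

lemma measurable_matrix_inv :
    Measurable fun v : Matrix (Fin n) (Fin n) ℝ => v⁻¹ := by
  have h : (fun v : Matrix (Fin n) (Fin n) ℝ => v⁻¹)
      = fun v => (v.det)⁻¹ • v.adjugate := by
    funext v; rw [Matrix.inv_def, Ring.inverse_eq_inv']
  rw [h]
  exact ((continuous_id.matrix_det).measurable.inv).smul
    (continuous_id.matrix_adjugate).measurable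


lemma base_gauss :
    Integrable (fun y : Fin n → ℝ => Real.exp (-(y ⬝ᵥ y) / 2)) volume ∧
    ∫ y : Fin n → ℝ, Real.exp (-(y ⬝ᵥ y) / 2) = (2 * π) ^ ((n : ℝ) / 2) := by
  have hrw : (fun y : Fin n → ℝ => Real.exp (-(y ⬝ᵥ y) / 2))
      = fun y => ∏ i, Real.exp (-(2⁻¹ : ℝ) * (y i) ^ 2) := by
    funext y
    rw [← Real.exp_sum]
    congr 1
    simp only [dotProduct]
    rw [neg_div, Finset.sum_div, ← Finset.sum_neg_distrib]
    exact Finset.sum_congr rfl fun i _ => by ring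
  constructor
  · rw [hrw]
    exact Integrable.fintype_prod (f := fun (_ : Fin n) (t : ℝ) => Real.exp (-(2⁻¹ : ℝ) * t ^ 2))
      fun _ => integrable_exp_neg_mul_sq (by norm_num)
  · rw [hrw, volume_pi, integral_fintype_prod_eq_pow (ι := Fin n) (fun t : ℝ => Real.exp (-(2⁻¹ : ℝ) * t ^ 2)),
      integral_gaussian]
    have h2 : π / (2⁻¹ : ℝ) = 2 * π := by field_simp
    rw [h2, Real.sqrt_eq_rpow, Fintype.card_fin,
      ← Real.rpow_natCast ((2 * π) ^ ((1 : ℝ) / 2)) n, ← Real.rpow_mul (by positivity)]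
    congr 1; ring

open scoped MatrixOrder in
lemma gauss_integral {A : Matrix (Fin n) (Fin n) ℝ} (hA : A.PosDef) :
    Integrable (fun x : Fin n → ℝ => Real.exp (-(x ⬝ᵥ A.mulVec x) / 2)) volume ∧
    ∫ x : Fin n → ℝ, Real.exp (-(x ⬝ᵥ A.mulVec x) / 2)
      = (2 * π) ^ ((n : ℝ) / 2) * A.det ^ (-(1 : ℝ) / 2) := by
  classical
  set B := CFC.sqrt A with hBdef
  have hB : B.PosSemidef := (CFC.sqrt_nonneg A).posSemidef
  have hBB : B * B = A := CFC.sqrt_mul_sqrt_self A hA.posSemidef.nonneg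
  have hdetsq : B.det * B.det = A.det := by rw [← det_mul, hBB]
  have hdetB_nonneg : 0 ≤ B.det := by
    rw [hB.1.det_eq_prod_eigenvalues]
    push_cast
    exact Finset.prod_nonneg fun i _ => hB.eigenvalues_nonneg i
  have hdetA_pos : 0 < A.det := hA.det_pos
  have hdetB_pos : 0 < B.det := by
    rcases hdetB_nonneg.lt_or_eq with h | h
    · exact h
    · exfalso; rw [← h] at hdetsq; simp at hdetsq; linarith [hdetsq ▸ hdetA_pos]
  have hdetB : B.det = Real.sqrt A.det := by
    rw [← hdetsq, Real.sqrt_mul_self hdetB_nonneg]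
  have hBt : Bᵀ = B := by
    rw [← Matrix.conjTranspose_eq_transpose_of_trivial]; exact hB.1
  have hquad : ∀ x : Fin n → ℝ, x ⬝ᵥ A.mulVec x = (B.mulVec x) ⬝ᵥ (B.mulVec x) := by
    intro x
    rw [← hBB, ← mulVec_mulVec, dotProduct_mulVec]
    congr 1
    rw [← hBt, vecMul_transpose, hBt]
  have hdet_ne : B.det ≠ 0 := hdetB_pos.ne'
  have hmap := Real.map_matrix_volume_pi_eq_smul_volume_pi (M := B) hdet_ne
  have hTcont : Continuous (Matrix.toLin' B) := LinearMap.continuous_of_finiteDimensional _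
  have hφcont : Continuous (fun y : Fin n → ℝ => Real.exp (-(y ⬝ᵥ y) / 2)) :=
    Real.continuous_exp.comp (((continuous_id.dotProduct continuous_id).neg).div_const 2)
  have hcomp : ∀ x : Fin n → ℝ,
      Real.exp (-(Matrix.toLin' B x ⬝ᵥ Matrix.toLin' B x) / 2)
        = Real.exp (-(x ⬝ᵥ A.mulVec x) / 2) := by
    intro x; rw [hquad x]; simp [Matrix.toLin'_apply]
  have hint_map : Integrable (fun y : Fin n → ℝ => Real.exp (-(y ⬝ᵥ y) / 2))
      (Measure.map (Matrix.toLin' B) volume) := by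
    rw [hmap]
    exact (base_gauss.1).smul_measure ENNReal.ofReal_ne_top
  have hint : Integrable (fun x : Fin n → ℝ => Real.exp (-(x ⬝ᵥ A.mulVec x) / 2)) volume := by
    have := (integrable_map_measure hφcont.aestronglyMeasurable
      hTcont.measurable.aemeasurable).mp hint_map
    refine this.congr (ae_of_all _ fun x => ?_)
    exact hcomp x
  refine ⟨hint, ?_⟩
  have h1 : ∫ x : Fin n → ℝ, Real.exp (-(x ⬝ᵥ A.mulVec x) / 2)
      = ∫ y, Real.exp (-(y ⬝ᵥ y) / 2) ∂(Measure.map (Matrix.toLin' B) volume) := by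
    rw [integral_map hTcont.measurable.aemeasurable hφcont.aestronglyMeasurable]
    exact (integral_congr_ae (ae_of_all _ fun x => (hcomp x).symm))
  rw [h1, hmap, integral_smul_measure, base_gauss.2, ENNReal.toReal_ofReal (by positivity)]
  rw [abs_of_nonneg (inv_nonneg.mpr hdetB_nonneg), hdetB, Real.sqrt_eq_rpow,
    ← Real.rpow_neg hdetA_pos.le]
  rw [smul_eq_mul, mul_comm]
  norm_num


/-- the integrand -/
noncomputable def g (n : ℕ) (v : Matrix (Fin n) (Fin n) ℝ) (x : Fin n → ℝ) : ℝ :=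
  (2 * π) ^ (-(n : ℝ) / 2) * v.det ^ (-(1 : ℝ) / 2) *
    Real.exp (-(x ⬝ᵥ v⁻¹.mulVec x) / 2)

lemma measurable_g :
    Measurable fun p : Matrix (Fin n) (Fin n) ℝ × (Fin n → ℝ) => g n p.1 p.2 := by
  have h1 : Measurable fun p : Matrix (Fin n) (Fin n) ℝ × (Fin n → ℝ) =>
      p.1.det ^ (-(1 : ℝ) / 2) :=
    ((continuous_fst.matrix_det).measurable).pow_const _
  have hinner : Continuous fun q : Matrix (Fin n) (Fin n) ℝ × (Fin n → ℝ) =>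
      q.2 ⬝ᵥ q.1.mulVec q.2 :=
    continuous_snd.dotProduct (continuous_fst.matrix_mulVec continuous_snd)
  have h2 : Measurable fun p : Matrix (Fin n) (Fin n) ℝ × (Fin n → ℝ) =>
      Real.exp (-(p.2 ⬝ᵥ p.1⁻¹.mulVec p.2) / 2) := by
    have : Measurable fun p : Matrix (Fin n) (Fin n) ℝ × (Fin n → ℝ) =>
        (p.1⁻¹, p.2) := (measurable_matrix_inv.comp measurable_fst).prodMk measurable_snd
    exact (Real.continuous_exp.measurable).comp
      ((((hinner.measurable.comp this).neg).div_const 2))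
  exact (measurable_const.mul h1).mul h2

lemma g_nonneg {v : Matrix (Fin n) (Fin n) ℝ} (hv : v.PosDef) (x : Fin n → ℝ) :
    0 ≤ g n v x :=
  mul_nonneg (mul_nonneg (Real.rpow_nonneg (by positivity) _)
    (Real.rpow_nonneg hv.det_pos.le _)) (Real.exp_pos _).le

lemma lintegral_g {v : Matrix (Fin n) (Fin n) ℝ} (hv : v.PosDef) :
    ∫⁻ x : Fin n → ℝ, ENNReal.ofReal (g n v x) = 1 := by
  have hC : 0 ≤ (2 * π) ^ (-(n : ℝ) / 2) * v.det ^ (-(1 : ℝ) / 2) :=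
    mul_nonneg (Real.rpow_nonneg (by positivity) _) (Real.rpow_nonneg hv.det_pos.le _)
  have hgauss := gauss_integral (n := n) hv.inv
  have hlin : ∫⁻ x : Fin n → ℝ, ENNReal.ofReal (Real.exp (-(x ⬝ᵥ v⁻¹.mulVec x) / 2))
      = ENNReal.ofReal ((2 * π) ^ ((n : ℝ) / 2) * (v⁻¹).det ^ (-(1 : ℝ) / 2)) := by
    rw [← ofReal_integral_eq_lintegral_ofReal hgauss.1
      (ae_of_all _ fun x => (Real.exp_pos _).le), hgauss.2]
  simp only [g]
  rw [funext fun x => ENNReal.ofReal_mul (p := (2 * π) ^ (-(n : ℝ) / 2) * v.det ^ (-(1 : ℝ) / 2)) hC]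
  rw [lintegral_const_mul' _ _ ENNReal.ofReal_ne_top, hlin, ← ENNReal.ofReal_mul hC]
  rw [det_nonsing_inv, Ring.inverse_eq_inv']
  have hd : (0:ℝ) < v.det := hv.det_pos
  have : (2 * π) ^ (-(n : ℝ) / 2) * v.det ^ (-(1 : ℝ) / 2) *
      ((2 * π) ^ ((n : ℝ) / 2) * (v.det⁻¹) ^ (-(1 : ℝ) / 2)) = 1 := by
    rw [Real.inv_rpow hd.le, ← Real.rpow_neg hd.le, mul_mul_mul_comm,
      ← Real.rpow_add (show (0:ℝ) < 2 * π by positivity), ← Real.rpow_add hd]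
    norm_num
    rw [neg_div, neg_add_cancel, Real.rpow_zero]
  rw [this, ENNReal.ofReal_one]



lemma gauss_lintegral {A : Matrix (Fin n) (Fin n) ℝ} (hA : A.PosDef) :
    ∫⁻ x : Fin n → ℝ, ENNReal.ofReal (Real.exp (-(x ⬝ᵥ A.mulVec x) / 2))
      = ENNReal.ofReal ((2 * π) ^ ((n : ℝ) / 2) * A.det ^ (-(1 : ℝ) / 2)) := by
  rw [← ofReal_integral_eq_lintegral_ofReal (gauss_integral hA).1
    (ae_of_all _ fun x => (Real.exp_pos _).le), (gauss_integral hA).2]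

lemma lintegral_g_mul {v w : Matrix (Fin n) (Fin n) ℝ} (hv : v.PosDef) (hw : w.PosDef) :
    ∫⁻ x : Fin n → ℝ, ENNReal.ofReal (g n v x) * ENNReal.ofReal (g n w x)
      = ENNReal.ofReal ((2 * π) ^ (-(n : ℝ) / 2)) *
        ENNReal.ofReal ((v + w).det ^ (-(1 : ℝ) / 2)) := by
  have ha : (0:ℝ) < v.det := hv.det_pos
  have hb : (0:ℝ) < w.det := hw.det_pos
  have hs : (0:ℝ) < (v + w).det := (hv.add hw).det_pos
  have hA : (v⁻¹ + w⁻¹).PosDef := hv.inv.add hw.inv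
  have hv' : IsUnit v.det := isUnit_iff_ne_zero.mpr ha.ne'
  have hw' : IsUnit w.det := isUnit_iff_ne_zero.mpr hb.ne'
  set c : ℝ := (2 * π) ^ (-(n : ℝ) / 2) with hc
  have hc0 : 0 ≤ c := Real.rpow_nonneg (by positivity) _
  set K : ℝ := c * v.det ^ (-(1 : ℝ) / 2) * (c * w.det ^ (-(1 : ℝ) / 2)) with hK
  have hK0 : 0 ≤ K := by
    apply mul_nonneg <;> exact mul_nonneg hc0 (Real.rpow_nonneg (by positivity) _)
  have hgg : ∀ x : Fin n → ℝ, g n v x * g n w x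
      = K * Real.exp (-(x ⬝ᵥ (v⁻¹ + w⁻¹).mulVec x) / 2) := by
    intro x
    have hexp : Real.exp (-(x ⬝ᵥ v⁻¹.mulVec x) / 2) * Real.exp (-(x ⬝ᵥ w⁻¹.mulVec x) / 2)
        = Real.exp (-(x ⬝ᵥ (v⁻¹ + w⁻¹).mulVec x) / 2) := by
      rw [← Real.exp_add]
      congr 1
      rw [add_mulVec, dotProduct_add]
      ring
    simp only [g, hK]
    rw [← hexp]; ring
  calc ∫⁻ x : Fin n → ℝ, ENNReal.ofReal (g n v x) * ENNReal.ofReal (g n w x)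
      = ∫⁻ x : Fin n → ℝ, ENNReal.ofReal K *
          ENNReal.ofReal (Real.exp (-(x ⬝ᵥ (v⁻¹ + w⁻¹).mulVec x) / 2)) := by
        apply lintegral_congr fun x => ?_
        rw [← ENNReal.ofReal_mul (g_nonneg hv x), hgg x, ENNReal.ofReal_mul hK0]
    _ = ENNReal.ofReal K *
          ENNReal.ofReal ((2 * π) ^ ((n : ℝ) / 2) * (v⁻¹ + w⁻¹).det ^ (-(1 : ℝ) / 2)) := by
        rw [lintegral_const_mul' _ _ ENNReal.ofReal_ne_top, gauss_lintegral hA]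
    _ = ENNReal.ofReal ((2 * π) ^ (-(n : ℝ) / 2)) *
          ENNReal.ofReal ((v + w).det ^ (-(1 : ℝ) / 2)) := by
        rw [← ENNReal.ofReal_mul hK0, ← ENNReal.ofReal_mul hc0]
        congr 1
        have hdet : (v⁻¹ + w⁻¹).det = v.det⁻¹ * ((v + w).det * w.det⁻¹) := by
          have hM : v⁻¹ + w⁻¹ = v⁻¹ * (v + w) * w⁻¹ := by
            rw [mul_add, Matrix.nonsing_inv_mul v hv', add_mul, one_mul, mul_assoc,
              Matrix.mul_nonsing_inv w hw', mul_one, add_comm]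
          rw [hM, det_mul, det_mul, det_nonsing_inv, det_nonsing_inv]
          simp only [Ring.inverse_eq_inv']
          ring
        have hsplit : (v.det⁻¹ * ((v + w).det * w.det⁻¹)) ^ (-(1:ℝ)/2)
            = (v.det ^ (-(1:ℝ)/2))⁻¹ *
              ((v + w).det ^ (-(1:ℝ)/2) * (w.det ^ (-(1:ℝ)/2))⁻¹) := by
          rw [Real.mul_rpow (by positivity) (by positivity),
            Real.mul_rpow (by positivity) (by positivity),
            Real.inv_rpow ha.le, Real.inv_rpow hb.le]
        rw [hdet, hK, hsplit]
        have hcy : c * (2 * π) ^ ((n : ℝ) / 2) = 1 := by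
          rw [hc, ← Real.rpow_add (show (0:ℝ) < 2 * π by positivity), neg_div,
            neg_add_cancel, Real.rpow_zero]
        have hap : v.det ^ (-(1:ℝ)/2) ≠ 0 := (Real.rpow_pos_of_pos ha _).ne'
        have hbp : w.det ^ (-(1:ℝ)/2) ≠ 0 := (Real.rpow_pos_of_pos hb _).ne'
        have : c * v.det ^ (-(1:ℝ)/2) * (c * w.det ^ (-(1:ℝ)/2)) *
            ((2 * π) ^ ((n : ℝ) / 2) *
              ((v.det ^ (-(1:ℝ)/2))⁻¹ * ((v + w).det ^ (-(1:ℝ)/2) * (w.det ^ (-(1:ℝ)/2))⁻¹)))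
            = (c * (2 * π) ^ ((n : ℝ) / 2)) * (v.det ^ (-(1:ℝ)/2) * (v.det ^ (-(1:ℝ)/2))⁻¹) *
              (w.det ^ (-(1:ℝ)/2) * (w.det ^ (-(1:ℝ)/2))⁻¹) * (c * (v + w).det ^ (-(1:ℝ)/2)) := by
          ring
        rw [this, hcy, mul_inv_cancel₀ hap, mul_inv_cancel₀ hbp, one_mul, one_mul, one_mul]
attribute [irreducible] g

end GaussMix

/-- Multivariate version: `f ∈ L²(ℝⁿ)` iff `E[det(V+V₁)^{-1/2}] < ∞`, and in that case
`∫ f² = (2π)^{-n/2} E[det(V+V₁)^{-1/2}]`. -/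
theorem matrix_gaussian_scale_mixture_L2 (n : ℕ)
    (μ : Measure (Matrix (Fin n) (Fin n) ℝ)) [IsProbabilityMeasure μ]
    (hμ : ∀ᵐ v ∂μ, v.PosDef)
    (f : (Fin n → ℝ) → ℝ)
    (hf : ∀ x, f x =
        ∫ v : Matrix (Fin n) (Fin n) ℝ,
          (2 * π) ^ (-(n : ℝ) / 2) * v.det ^ (-(1 : ℝ) / 2) *
            Real.exp (-(x ⬝ᵥ v⁻¹.mulVec x) / 2) ∂μ) :
    (MemLp f 2 volume ↔
        (∫⁻ p : Matrix (Fin n) (Fin n) ℝ × Matrix (Fin n) (Fin n) ℝ,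
            ENNReal.ofReal ((p.1 + p.2).det ^ (-(1 : ℝ) / 2)) ∂(μ.prod μ)) < ⊤) ∧
      (MemLp f 2 volume →
        (∫ x, f x ^ 2) =
          (2 * π) ^ (-(n : ℝ) / 2) *
            ∫ p : Matrix (Fin n) (Fin n) ℝ × Matrix (Fin n) (Fin n) ℝ,
              (p.1 + p.2).det ^ (-(1 : ℝ) / 2) ∂(μ.prod μ)) := by
  classical
  have hf' : ∀ x, f x = ∫ v, GaussMix.g n v x ∂μ := by
    intro x; rw [hf x]; simp only [GaussMix.g]
  have hgm := GaussMix.measurable_g (n := n)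
  have hgm' : ∀ x : Fin n → ℝ, Measurable fun v : Matrix (Fin n) (Fin n) ℝ =>
      GaussMix.g n v x := fun x => hgm.comp (measurable_id.prodMk measurable_const)
  have hgswap : Measurable fun q : (Fin n → ℝ) × Matrix (Fin n) (Fin n) ℝ =>
      GaussMix.g n q.2 q.1 := hgm.comp measurable_swap
  set G : (Fin n → ℝ) → ENNReal :=
    fun x => ∫⁻ v, ENNReal.ofReal (GaussMix.g n v x) ∂μ with hG
  have hGmeas : Measurable G :=
    Measurable.lintegral_prod_right (f := fun x v => ENNReal.ofReal (GaussMix.g n v x))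
      (ENNReal.measurable_ofReal.comp hgswap)
  have hfx : ∀ x, f x = (G x).toReal := by
    intro x
    rw [hf' x, integral_eq_lintegral_of_nonneg_ae
      (hμ.mono fun v hv => GaussMix.g_nonneg hv x) (hgm' x).aestronglyMeasurable]
  have hfnn : ∀ x, 0 ≤ f x := fun x => by rw [hfx x]; exact ENNReal.toReal_nonneg
  have hprod_ae : ∀ᵐ p : Matrix (Fin n) (Fin n) ℝ × Matrix (Fin n) (Fin n) ℝ ∂μ.prod μ,
      p.1.PosDef ∧ p.2.PosDef := by
    have h1 : ∀ᵐ p : Matrix (Fin n) (Fin n) ℝ × Matrix (Fin n) (Fin n) ℝ ∂μ.prod μ,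
        p.1.PosDef :=
      ae_of_ae_map measurable_fst.aemeasurable
        (by rwa [Measure.map_fst_prod, measure_univ, one_smul])
    have h2 : ∀ᵐ p : Matrix (Fin n) (Fin n) ℝ × Matrix (Fin n) (Fin n) ℝ ∂μ.prod μ,
        p.2.PosDef :=
      ae_of_ae_map measurable_snd.aemeasurable
        (by rwa [Measure.map_snd_prod, measure_univ, one_smul])
    exact h1.and h2
  have hGfin : ∀ᵐ x ∂(volume : Measure (Fin n → ℝ)), G x < ⊤ := by
    apply ae_lt_top hGmeas
    have hswap : ∫⁻ x, G x ∂volume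
        = ∫⁻ v, ∫⁻ x, ENNReal.ofReal (GaussMix.g n v x) ∂volume ∂μ :=
      lintegral_lintegral_swap (ENNReal.measurable_ofReal.comp hgswap).aemeasurable
    rw [hswap]
    have : ∫⁻ v, ∫⁻ x, ENNReal.ofReal (GaussMix.g n v x) ∂volume ∂μ = 1 := by
      rw [lintegral_congr_ae (hμ.mono fun v hv => GaussMix.lintegral_g hv)]
      simp
    simp [this]
  have hmeas_pair : Measurable fun q :
      (Fin n → ℝ) × (Matrix (Fin n) (Fin n) ℝ × Matrix (Fin n) (Fin n) ℝ) =>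
      ENNReal.ofReal (GaussMix.g n q.2.1 q.1) * ENNReal.ofReal (GaussMix.g n q.2.2 q.1) := by
    apply Measurable.fun_mul
    · exact ENNReal.measurable_ofReal.comp (hgm.comp (measurable_snd.fst.prodMk measurable_fst))
    · exact ENNReal.measurable_ofReal.comp (hgm.comp (measurable_snd.snd.prodMk measurable_fst))
  set L : ENNReal :=
    ∫⁻ p : Matrix (Fin n) (Fin n) ℝ × Matrix (Fin n) (Fin n) ℝ,
      ENNReal.ofReal ((p.1 + p.2).det ^ (-(1 : ℝ) / 2)) ∂(μ.prod μ) with hL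
  have key : ∫⁻ x, ENNReal.ofReal (f x ^ 2) ∂volume
      = ENNReal.ofReal ((2 * π) ^ (-(n : ℝ) / 2)) * L := by
    have h1 : ∫⁻ x, ENNReal.ofReal (f x ^ 2) ∂volume = ∫⁻ x, G x * G x ∂volume := by
      apply lintegral_congr_ae
      filter_upwards [hGfin] with x hx
      rw [hfx x, sq, ENNReal.ofReal_mul ENNReal.toReal_nonneg, ENNReal.ofReal_toReal hx.ne]
    have h2 : ∀ x, G x * G x
        = ∫⁻ p : Matrix (Fin n) (Fin n) ℝ × Matrix (Fin n) (Fin n) ℝ,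
            ENNReal.ofReal (GaussMix.g n p.1 x) * ENNReal.ofReal (GaussMix.g n p.2 x)
            ∂(μ.prod μ) := fun x =>
      (lintegral_prod_mul (ENNReal.measurable_ofReal.comp (hgm' x)).aemeasurable
        (ENNReal.measurable_ofReal.comp (hgm' x)).aemeasurable).symm
    have h3 : ∫⁻ x, (∫⁻ p : Matrix (Fin n) (Fin n) ℝ × Matrix (Fin n) (Fin n) ℝ,
          ENNReal.ofReal (GaussMix.g n p.1 x) * ENNReal.ofReal (GaussMix.g n p.2 x)
          ∂(μ.prod μ)) ∂volume
        = ∫⁻ p : Matrix (Fin n) (Fin n) ℝ × Matrix (Fin n) (Fin n) ℝ,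
            ∫⁻ x, ENNReal.ofReal (GaussMix.g n p.1 x) * ENNReal.ofReal (GaussMix.g n p.2 x)
            ∂volume ∂(μ.prod μ) :=
      lintegral_lintegral_swap hmeas_pair.aemeasurable
    rw [h1, lintegral_congr h2, h3]
    have h4 : ∫⁻ p : Matrix (Fin n) (Fin n) ℝ × Matrix (Fin n) (Fin n) ℝ,
          (∫⁻ x, ENNReal.ofReal (GaussMix.g n p.1 x) * ENNReal.ofReal (GaussMix.g n p.2 x)
          ∂volume) ∂(μ.prod μ)
        = ∫⁻ p : Matrix (Fin n) (Fin n) ℝ × Matrix (Fin n) (Fin n) ℝ,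
            ENNReal.ofReal ((2 * π) ^ (-(n : ℝ) / 2)) *
              ENNReal.ofReal ((p.1 + p.2).det ^ (-(1 : ℝ) / 2)) ∂(μ.prod μ) := by
      apply lintegral_congr_ae
      filter_upwards [hprod_ae] with p hp
      exact GaussMix.lintegral_g_mul hp.1 hp.2
    rw [h4, lintegral_const_mul' _ _ ENNReal.ofReal_ne_top]
  have hfm : AEStronglyMeasurable f volume := by
    have hF : StronglyMeasurable fun q : (Fin n → ℝ) × Matrix (Fin n) (Fin n) ℝ =>
        GaussMix.g n q.2 q.1 := hgswap.stronglyMeasurable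
    have hsm := hF.integral_prod_right' (ν := μ)
    exact hsm.aestronglyMeasurable.congr (ae_of_all _ fun x => (hf' x).symm)
  have hsqm : AEStronglyMeasurable (fun x => f x ^ 2) volume :=
    (hfm.mul hfm).congr (ae_of_all _ fun x => (pow_two (f x)).symm)
  have hnn : ∫⁻ x, ‖f x ^ 2‖ₑ ∂volume = ∫⁻ x, ENNReal.ofReal (f x ^ 2) ∂volume :=
    lintegral_congr fun x => (Real.enorm_eq_ofReal (sq_nonneg _))
  have hiff : Integrable (fun x => f x ^ 2) volume ↔
      (∫⁻ x, ENNReal.ofReal (f x ^ 2) ∂volume) < ⊤ := by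
    constructor
    · intro h; rw [← hnn]; exact h.2
    · intro h; exact ⟨hsqm, by rw [HasFiniteIntegral, hnn]; exact h⟩
  have hc'0 : ENNReal.ofReal ((2 * π) ^ (-(n : ℝ) / 2)) ≠ 0 :=
    (ENNReal.ofReal_pos.mpr (Real.rpow_pos_of_pos (by positivity) _)).ne'
  have hmain_iff : MemLp f 2 volume ↔ L < ⊤ := by
    rw [memLp_two_iff_integrable_sq hfm, hiff, key]
    constructor
    · intro h
      by_contra htop
      rw [lt_top_iff_ne_top, not_not] at htop
      rw [htop, ENNReal.mul_top hc'0] at h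
      exact (lt_irrefl _ h).elim
    · intro h
      exact ENNReal.mul_lt_top ENNReal.ofReal_lt_top h
  refine ⟨hmain_iff, fun hmem => ?_⟩
  have hLfin : L < ⊤ := hmain_iff.mp hmem
  have h1 : ∫ x, f x ^ 2 = (∫⁻ x, ENNReal.ofReal (f x ^ 2) ∂volume).toReal :=
    integral_eq_lintegral_of_nonneg_ae (ae_of_all _ fun x => sq_nonneg _) hsqm
  have h2 : ∫ p : Matrix (Fin n) (Fin n) ℝ × Matrix (Fin n) (Fin n) ℝ,
      (p.1 + p.2).det ^ (-(1 : ℝ) / 2) ∂(μ.prod μ) = L.toReal :=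
    integral_eq_lintegral_of_nonneg_ae
      (hprod_ae.mono fun p hp => Real.rpow_nonneg (hp.1.add hp.2).det_pos.le _)
      (((continuous_fst.add continuous_snd).matrix_det.measurable).pow_const
        _).aestronglyMeasurable
  rw [h1, key, ENNReal.toReal_mul, ENNReal.toReal_ofReal
    (Real.rpow_nonneg (by positivity) _), h2]
end

section
/- Let ν be a probability measure on (0,∞) and suppose t = diag(t₁,…,tₙ) with tᵢ > 0 minimizes I₁*(t₁,…,tₙ) = π^{n/2}/√(t₁⋯tₙ) − 2∫₀^∞ ∏ᵢ(tᵢ+λ)^{-1/2} ν(dλ) over (0,∞)ⁿ. Then t₁ = t₂ = ⋯ = tₙ. -/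
open MeasureTheory Real Set Filter
open scoped ENNReal NNReal

lemma prod_rpow_le_aux (n : ℕ) (l lam0 : ℝ) (hl : 0 < l) (hlam0 : 0 < lam0)
    (t : Fin n → ℝ) (ht : ∀ i, 0 < t i) :
    ∏ k, (t k + l) ^ (-(1:ℝ)/2) ≤
      (∏ k, (min 1 (t k / lam0)) ^ (-(1:ℝ)/2)) * (lam0 + l) ^ (-(n:ℝ)/2) := by
  have hX : 0 < lam0 + l := by linarith
  have hck : ∀ k : Fin n, 0 < min 1 (t k / lam0) := fun k =>
    lt_min one_pos (div_pos (ht k) hlam0)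
  have h1 : ∀ k : Fin n,
      (t k + l) ^ (-(1:ℝ)/2) ≤ (min 1 (t k / lam0) * (lam0 + l)) ^ (-(1:ℝ)/2) := by
    intro k
    apply Real.rpow_le_rpow_of_nonpos (mul_pos (hck k) hX) ?_ (by norm_num)
    have h2 : min 1 (t k / lam0) * lam0 ≤ t k := by
      calc min 1 (t k / lam0) * lam0 ≤ (t k / lam0) * lam0 :=
            mul_le_mul_of_nonneg_right (min_le_right _ _) hlam0.le
        _ = t k := by field_simp
    nlinarith [min_le_left 1 (t k / lam0), (hck k).le]
  calc ∏ k, (t k + l) ^ (-(1:ℝ)/2)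
      ≤ ∏ k, (min 1 (t k / lam0) * (lam0 + l)) ^ (-(1:ℝ)/2) :=
        Finset.prod_le_prod (fun k _ => Real.rpow_nonneg (by nlinarith [ht k]) _)
          (fun k _ => h1 k)
    _ = ∏ k, (min 1 (t k / lam0)) ^ (-(1:ℝ)/2) * (lam0 + l) ^ (-(1:ℝ)/2) :=
        Finset.prod_congr rfl fun k _ => Real.mul_rpow (hck k).le hX.le
    _ = (∏ k, (min 1 (t k / lam0)) ^ (-(1:ℝ)/2)) * ((lam0 + l) ^ (-(1:ℝ)/2)) ^ (n : ℕ) := by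
        rw [Finset.prod_mul_distrib, Finset.prod_const, Finset.card_univ, Fintype.card_fin]
    _ = _ := by
        rw [← Real.rpow_natCast ((lam0 + l) ^ (-(1:ℝ)/2)) n, ← Real.rpow_mul hX.le,
          show (-(1:ℝ)/2 * (n:ℝ)) = (-(n:ℝ)/2) by ring]

lemma integrable_prod_rpow (n : ℕ) (ν : Measure ℝ) [IsProbabilityMeasure ν]
    (hν : ν (Iic 0) = 0) (lam0 : ℝ) (hlam0 : 0 < lam0)
    (hfin : (∫⁻ y, ENNReal.ofReal ((lam0 + y) ^ (-(n:ℝ)/2)) ∂ν) < ⊤)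
    (t : Fin n → ℝ) (ht : ∀ i, 0 < t i) :
    Integrable (fun l => ∏ k, (t k + l) ^ (-(1:ℝ)/2)) ν := by
  have hpos : ∀ᵐ l ∂ν, 0 < l := by
    rw [ae_iff]
    convert hν using 2
    ext x; simp [not_lt]
  have hm : Measurable fun l => ∏ k : Fin n, (t k + l) ^ (-(1:ℝ)/2) :=
    Finset.measurable_prod _ fun k _ => (measurable_const.add measurable_id).pow_const _
  have hCpos : (0:ℝ) < ∏ k : Fin n, (min 1 (t k / lam0)) ^ (-(1:ℝ)/2) :=
    Finset.prod_pos fun k _ =>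
      Real.rpow_pos_of_pos (lt_min one_pos (div_pos (ht k) hlam0)) _
  set f : ℝ → ℝ := fun l => ∏ k : Fin n, (t k + l) ^ (-(1:ℝ)/2) with hf
  refine ⟨hm.aestronglyMeasurable, ?_⟩
  show (∫⁻ l, (‖f l‖₊ : ℝ≥0∞) ∂ν) < ⊤
  have hb : ∀ᵐ l ∂ν, (‖f l‖₊ : ℝ≥0∞)
      ≤ ENNReal.ofReal (∏ k : Fin n, (min 1 (t k / lam0)) ^ (-(1:ℝ)/2)) *
          ENNReal.ofReal ((lam0 + l) ^ (-(n:ℝ)/2)) := by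
    filter_upwards [hpos] with l hl
    have hf0 : 0 ≤ f l :=
      Finset.prod_nonneg fun k _ => Real.rpow_nonneg (by nlinarith [ht k]) _
    rw [← ENNReal.ofReal_mul hCpos.le, ← enorm_eq_nnnorm, Real.enorm_eq_ofReal hf0]
    exact ENNReal.ofReal_le_ofReal (prod_rpow_le_aux n l lam0 hl hlam0 t ht)
  calc (∫⁻ l, (‖f l‖₊ : ℝ≥0∞) ∂ν)
      ≤ ∫⁻ l, ENNReal.ofReal (∏ k : Fin n, (min 1 (t k / lam0)) ^ (-(1:ℝ)/2)) *
          ENNReal.ofReal ((lam0 + l) ^ (-(n:ℝ)/2)) ∂ν := lintegral_mono_ae hb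
    _ = ENNReal.ofReal (∏ k : Fin n, (min 1 (t k / lam0)) ^ (-(1:ℝ)/2)) *
          ∫⁻ l, ENNReal.ofReal ((lam0 + l) ^ (-(n:ℝ)/2)) ∂ν :=
        lintegral_const_mul' _ _ ENNReal.ofReal_ne_top
    _ < ⊤ := ENNReal.mul_lt_top ENNReal.ofReal_lt_top hfin

lemma prod_lt_aux {n : ℕ} (t s : Fin n → ℝ) (ht : ∀ i, 0 < t i) (i j : Fin n)
    (hij : i ≠ j) (hne : t i ≠ t j)
    (hsi : s i = Real.sqrt (t i * t j)) (hsj : s j = Real.sqrt (t i * t j))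
    (hsk : ∀ k, k ≠ i → k ≠ j → s k = t k) (l : ℝ) (hl : 0 < l) :
    ∏ k, (t k + l) ^ (-(1:ℝ)/2) < ∏ k, (s k + l) ^ (-(1:ℝ)/2) := by
  set g := Real.sqrt (t i * t j) with hg
  have hjmem : j ∈ Finset.univ.erase i := Finset.mem_erase.mpr ⟨hij.symm, Finset.mem_univ j⟩
  have split : ∀ F : Fin n → ℝ,
      ∏ k, F k = F i * (F j * ∏ k ∈ (Finset.univ.erase i).erase j, F k) := by
    intro F
    rw [← Finset.mul_prod_erase _ F (Finset.mem_univ i), ← Finset.mul_prod_erase _ F hjmem]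
  rw [split (fun k => (t k + l) ^ (-(1:ℝ)/2)), split (fun k => (s k + l) ^ (-(1:ℝ)/2))]
  have htail : ∏ k ∈ (Finset.univ.erase i).erase j, (s k + l) ^ (-(1:ℝ)/2)
      = ∏ k ∈ (Finset.univ.erase i).erase j, (t k + l) ^ (-(1:ℝ)/2) := by
    refine Finset.prod_congr rfl fun k hk => ?_
    obtain ⟨hkj, hk'⟩ := Finset.mem_erase.mp hk
    obtain ⟨hki, _⟩ := Finset.mem_erase.mp hk'
    rw [hsk k hki hkj]
  have hR : 0 < ∏ k ∈ (Finset.univ.erase i).erase j, (t k + l) ^ (-(1:ℝ)/2) :=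
    Finset.prod_pos fun k _ => Real.rpow_pos_of_pos (by nlinarith [ht k]) _
  simp only [hsi, hsj, htail]
  set a := Real.sqrt (t i) with ha'
  set b := Real.sqrt (t j) with hb'
  have ha : a * a = t i := Real.mul_self_sqrt (ht i).le
  have hb : b * b = t j := Real.mul_self_sqrt (ht j).le
  have hgab : g = a * b := by rw [hg, ha', hb', Real.sqrt_mul (ht i).le]
  have hab : a ≠ b := fun h => hne (by rw [← ha, ← hb, h])
  have hglpos : 0 < g + l := by
    have := Real.sqrt_nonneg (t i * t j); rw [← hg] at this; linarith
  have hprodlt : (g + l) * (g + l) < (t i + l) * (t j + l) := by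
    have h2 : 0 < (a - b) ^ 2 := by
      have h3 : a - b ≠ 0 := sub_ne_zero.mpr hab
      positivity
    rw [hgab, ← ha, ← hb]
    nlinarith [mul_pos hl h2]
  have core : (t i + l) ^ (-(1:ℝ)/2) * (t j + l) ^ (-(1:ℝ)/2)
      < (g + l) ^ (-(1:ℝ)/2) * (g + l) ^ (-(1:ℝ)/2) := by
    rw [← Real.mul_rpow (by nlinarith [ht i]) (by nlinarith [ht j]),
      ← Real.mul_rpow hglpos.le hglpos.le]
    exact Real.rpow_lt_rpow_of_neg (by positivity) hprodlt (by norm_num)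
  calc (t i + l) ^ (-(1:ℝ)/2) * ((t j + l) ^ (-(1:ℝ)/2) * _)
      = (t i + l) ^ (-(1:ℝ)/2) * (t j + l) ^ (-(1:ℝ)/2) * _ := by ring
    _ < (g + l) ^ (-(1:ℝ)/2) * (g + l) ^ (-(1:ℝ)/2) *
        ∏ k ∈ (Finset.univ.erase i).erase j, (t k + l) ^ (-(1:ℝ)/2) :=
        mul_lt_mul_of_pos_right core hR
    _ = _ := by ring

/-- If a positive tuple `(t₁,…,tₙ)` minimizes
`I₁*(t) = π^{n/2}/√(t₁⋯tₙ) − 2∫ ∏ᵢ (tᵢ+λ)^{-1/2} ν(dλ)`, then all the `tᵢ` are equal. -/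
theorem minimizer_of_diagonal_discrepancy_is_scalar (n : ℕ)
    (ν : Measure ℝ) [IsProbabilityMeasure ν] (hν : ν (Iic 0) = 0)
    (hint : (∫⁻ p : ℝ × ℝ, ENNReal.ofReal ((p.1 + p.2) ^ (-(n : ℝ) / 2)) ∂(ν.prod ν)) < ⊤)
    (I₁ : (Fin n → ℝ) → ℝ)
    (hI₁ : ∀ t : Fin n → ℝ, I₁ t =
        π ^ ((n : ℝ) / 2) / Real.sqrt (∏ i, t i) -
          2 * ∫ l, ∏ i, (t i + l) ^ (-(1 : ℝ) / 2) ∂ν)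
    (t : Fin n → ℝ) (ht : ∀ i, 0 < t i)
    (hmin : ∀ s : Fin n → ℝ, (∀ i, 0 < s i) → I₁ t ≤ I₁ s) :
    ∀ i j : Fin n, t i = t j := by
  intro i j
  by_cases hij : i = j
  · rw [hij]
  by_contra hne
  have hpos : ∀ᵐ l ∂ν, 0 < l := by
    rw [ae_iff]
    convert hν using 2
    ext x; simp [not_lt]
  -- find lam0 > 0 with finite integral
  have hmeas2 : Measurable fun p : ℝ × ℝ => ENNReal.ofReal ((p.1 + p.2) ^ (-(n : ℝ) / 2)) :=
    ((measurable_fst.add measurable_snd).pow_const _).ennreal_ofReal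
  rw [lintegral_prod _ hmeas2.aemeasurable] at hint
  have hae := ae_lt_top hmeas2.lintegral_prod_right' hint.ne
  obtain ⟨lam0, hlam0fin, hlam0pos⟩ := (hae.and hpos).exists
  have hfin : (∫⁻ y, ENNReal.ofReal ((lam0 + y) ^ (-(n:ℝ)/2)) ∂ν) < ⊤ := hlam0fin
  -- the competitor
  set g := Real.sqrt (t i * t j) with hg
  have hgpos : 0 < g := Real.sqrt_pos.mpr (mul_pos (ht i) (ht j))
  set s := Function.update (Function.update t i g) j g with hsdef
  have hsj : s j = g := Function.update_self _ _ _
  have hsi : s i = g := by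
    rw [hsdef, Function.update_of_ne hij, Function.update_self]
  have hsk : ∀ k, k ≠ i → k ≠ j → s k = t k := by
    intro k hki hkj
    rw [hsdef, Function.update_of_ne hkj, Function.update_of_ne hki]
  have hs : ∀ k, 0 < s k := by
    intro k
    by_cases h1 : k = j
    · rw [h1, hsj]; exact hgpos
    by_cases h2 : k = i
    · rw [h2, hsi]; exact hgpos
    · rw [hsk k h2 h1]; exact ht k
  -- products are equal
  have hjmem : j ∈ Finset.univ.erase i := Finset.mem_erase.mpr ⟨(Ne.symm hij), Finset.mem_univ j⟩
  have split : ∀ F : Fin n → ℝ,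
      ∏ k, F k = F i * (F j * ∏ k ∈ (Finset.univ.erase i).erase j, F k) := by
    intro F
    rw [← Finset.mul_prod_erase _ F (Finset.mem_univ i), ← Finset.mul_prod_erase _ F hjmem]
  have hprodeq : (∏ k, s k) = ∏ k, t k := by
    rw [split s, split t]
    have htail : ∏ k ∈ (Finset.univ.erase i).erase j, s k
        = ∏ k ∈ (Finset.univ.erase i).erase j, t k := by
      refine Finset.prod_congr rfl fun k hk => ?_
      obtain ⟨hkj, hk'⟩ := Finset.mem_erase.mp hk
      obtain ⟨hki, _⟩ := Finset.mem_erase.mp hk'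
      exact hsk k hki hkj
    rw [hsi, hsj, htail, ← mul_assoc, ← mul_assoc,
      show g * g = t i * t j from Real.mul_self_sqrt (mul_pos (ht i) (ht j)).le]
  -- integrability
  have ht_int : Integrable (fun l => ∏ k, (t k + l) ^ (-(1:ℝ)/2)) ν :=
    integrable_prod_rpow n ν hν lam0 hlam0pos hfin t ht
  have hs_int : Integrable (fun l => ∏ k, (s k + l) ^ (-(1:ℝ)/2)) ν :=
    integrable_prod_rpow n ν hν lam0 hlam0pos hfin s hs
  -- strict inequality of integrals
  have hlt : ∀ l, 0 < l → ∏ k, (t k + l) ^ (-(1:ℝ)/2) < ∏ k, (s k + l) ^ (-(1:ℝ)/2) :=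
    fun l hl => prod_lt_aux t s ht i j hij hne hsi hsj hsk l hl
  have hd_nonneg : 0 ≤ᵐ[ν]
      fun l => (∏ k, (s k + l) ^ (-(1:ℝ)/2)) - ∏ k, (t k + l) ^ (-(1:ℝ)/2) := by
    filter_upwards [hpos] with l hl
    have := hlt l hl
    simp only [Pi.zero_apply]
    linarith
  have hd_int : Integrable
      (fun l => (∏ k, (s k + l) ^ (-(1:ℝ)/2)) - ∏ k, (t k + l) ^ (-(1:ℝ)/2)) ν :=
    hs_int.sub ht_int
  have hIoi : ν (Ioi (0:ℝ)) = 1 := by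
    rw [← compl_Iic, prob_compl_eq_one_sub measurableSet_Iic, hν]
    simp
  have hdi : (0:ℝ) < ∫ l,
      ((∏ k, (s k + l) ^ (-(1:ℝ)/2)) - ∏ k, (t k + l) ^ (-(1:ℝ)/2)) ∂ν := by
    rw [integral_pos_iff_support_of_nonneg_ae hd_nonneg hd_int]
    refine lt_of_lt_of_le (b := ν (Ioi (0:ℝ))) ?_ (measure_mono ?_)
    · rw [hIoi]; norm_num
    · intro l hl
      have := hlt l hl
      simp only [Function.mem_support]
      intro h
      rw [sub_eq_zero] at h
      exact absurd h.symm (ne_of_lt this)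
  rw [integral_sub hs_int ht_int] at hdi
  have hmins := hmin s hs
  rw [hI₁ t, hI₁ s, hprodeq] at hmins
  linarith
end
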